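/- arXiv:0909.2769 — 10 statements merged into one kernel-verified Lean document; each statement's English description precedes it below -/
import Mathlib

section
/- If f is a fall k-coloring of the lexicographic product G[H], then for each vertex x of G, the restriction of f to the copy H_x = {x} × V(H) is a fall coloring of H_x using exactly |f({x} × V(H))| colors (i.e., every vertex of H_x sees all colors of f({x} × V(H)) within its closed neighborhood inside H_x). -/
open SimpleGraph

/-- A fall coloring: a proper coloring in which every vertex sees all colors
on its closed neighborhood. -/
def IsFallColoring {α : Type*} (G : SimpleGraph α) {k : ℕ} (f : α → Fin k) : Prop :=
  (∀ u v, G.Adj u v → f u ≠ f v) ∧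
  (∀ v (c : Fin k), ∃ u, (u = v ∨ G.Adj v u) ∧ f u = c)

/-- The set of positive integers `k` such that `G` has a fall `k`-coloring. -/
def Fall {α : Type*} (G : SimpleGraph α) : Set ℕ :=
  {k | 0 < k ∧ ∃ f : α → Fin k, IsFallColoring G f}

/-- The lexicographic product `G[H]`. -/
def lexProd {α β : Type*} (G : SimpleGraph α) (H : SimpleGraph β) : SimpleGraph (α × β) :=
  SimpleGraph.fromRel (fun p q => G.Adj p.1 q.1 ∨ (p.1 = q.1 ∧ H.Adj p.2 q.2))

/-- The categorical (tensor) product `G × H`. -/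
def tensorProd {α β : Type*} (G : SimpleGraph α) (H : SimpleGraph β) : SimpleGraph (α × β) :=
  SimpleGraph.fromRel (fun p q => G.Adj p.1 q.1 ∧ H.Adj p.2 q.2)

/-- A type-II graph homomorphism from `G` to `H`. -/
def IsTypeII {α β : Type*} (G : SimpleGraph α) (H : SimpleGraph β) (f : α → β) : Prop :=
  (∀ u v, G.Adj u v → H.Adj (f u) (f v)) ∧
  (∀ u₁ v₁, H.Adj u₁ v₁ → ∀ v, f v = v₁ → ∃ u, f u = u₁ ∧ G.Adj u v)

/-- restriction of a fall coloring of G[H] to a copy H_x is a fall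
coloring of H_x with the colors appearing on that copy. -/
theorem fall_coloring_restrict_lexProd {α β : Type*} (G : SimpleGraph α) (H : SimpleGraph β)
    {k : ℕ} (f : α × β → Fin k) (hf : IsFallColoring (lexProd G H) f) (x : α) :
    (∀ y y' : β, H.Adj y y' → f (x, y) ≠ f (x, y')) ∧
    (∀ (y : β) (c : Fin k), (∃ y₀ : β, f (x, y₀) = c) →
      ∃ y' : β, (y' = y ∨ H.Adj y y') ∧ f (x, y') = c) := by
  have adj_iff : ∀ p q : α × β, (lexProd G H).Adj p q ↔
      p ≠ q ∧ ((G.Adj p.1 q.1 ∨ (p.1 = q.1 ∧ H.Adj p.2 q.2)) ∨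
        (G.Adj q.1 p.1 ∨ (q.1 = p.1 ∧ H.Adj q.2 p.2))) := fun p q =>
    SimpleGraph.fromRel_adj _ _ _
  obtain ⟨hp, hc⟩ := hf
  constructor
  · intro y y' hyy'
    apply hp
    exact (adj_iff _ _).mpr ⟨by simp [hyy'.ne], Or.inl (Or.inr ⟨rfl, hyy'⟩)⟩
  · intro y c ⟨y₀, hy₀⟩
    obtain ⟨u, hu, huc⟩ := hc (x, y) c
    rcases hu with rfl | hadj
    · exact ⟨y, Or.inl rfl, huc⟩
    · rw [adj_iff] at hadj
      obtain ⟨hne, h⟩ := hadj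
      rcases h with (hG | ⟨hx, hH⟩) | (hG | ⟨hx, hH⟩)
      · exact absurd (hy₀.trans huc.symm)
          (hp (x, y₀) u ((adj_iff _ _).mpr ⟨fun h => G.irrefl (h ▸ hG), Or.inl (Or.inl hG)⟩))
      · exact ⟨u.2, Or.inr hH, by rw [← huc]; congr 1; exact Prod.ext hx rfl⟩
      · exact absurd (hy₀.trans huc.symm)
          (hp (x, y₀) u ((adj_iff _ _).mpr ⟨fun h => G.irrefl (h ▸ hG), Or.inr (Or.inl hG)⟩))
      · exact ⟨u.2, Or.inr hH.symm, by rw [← huc]; congr 1; exact Prod.ext hx.symm rfl⟩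
end

section
/- If the lexicographic product G[H] admits a fall coloring (for some k), then H admits a fall coloring (for some k'). Equivalently, if Fall(H) = ∅ then Fall(G[H]) = ∅. -/
open SimpleGraph

/-- if G[H] has a fall coloring then so does H. -/
theorem fall_lexProd_nonempty_imp {α β : Type*} [Nonempty α]
    (G : SimpleGraph α) (H : SimpleGraph β)
    (h : (Fall (lexProd G H)).Nonempty) : (Fall H).Nonempty := by
  classical
  rcases isEmpty_or_nonempty β with hβ | hβ
  · exact ⟨1, Nat.one_pos, (fun y => isEmptyElim y),
      fun u v hu => isEmptyElim u, fun v => isEmptyElim v⟩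
  obtain ⟨k, hk, f, hproper, hfall⟩ := h
  obtain ⟨a⟩ := ‹Nonempty α›
  set S : Set (Fin k) := Set.range (fun y => f (a, y)) with hS
  have hSne : Nonempty S := ⟨⟨f (a, Classical.arbitrary β), ⟨_, rfl⟩⟩⟩
  let e : S ≃ Fin (Nat.card S) := Finite.equivFin S
  have hpos : 0 < Nat.card S := Nat.card_pos
  let g : β → Fin (Nat.card S) := fun y => e ⟨f (a, y), ⟨y, rfl⟩⟩
  refine ⟨Nat.card S, hpos, g, ?_, ?_⟩
  · intro u v huv hEq
    have h1 : (lexProd G H).Adj (a, u) (a, v) := by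
      rw [lexProd, SimpleGraph.fromRel_adj]
      exact ⟨by simp [huv.ne], Or.inl (Or.inr ⟨rfl, huv⟩)⟩
    exact hproper _ _ h1 (Subtype.ext_iff.mp (e.injective hEq))
  · intro y c'
    set c := e.symm c' with hcdef
    have key : ∀ t : β, f (a, t) = (c : Fin k) → g t = c' := by
      intro t ht
      show e ⟨f (a, t), ⟨t, rfl⟩⟩ = c'
      have h2 : (⟨f (a, t), ⟨t, rfl⟩⟩ : S) = c := Subtype.ext ht
      rw [h2, hcdef, Equiv.apply_symm_apply]
    obtain ⟨z, hz⟩ := c.2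
    obtain ⟨⟨a', u⟩, hw1, hw2⟩ := hfall (a, y) c.1
    rcases hw1 with hw1 | hw1
    · refine ⟨y, Or.inl rfl, key y ?_⟩
      rw [show (a, y) = ((a', u) : α × β) from hw1.symm]; exact hw2
    · rw [lexProd, SimpleGraph.fromRel_adj] at hw1
      obtain ⟨hne, hrel⟩ := hw1
      have hGcase : ∀ (hGa : G.Adj a a'), False := by
        intro hGa
        have hadj : (lexProd G H).Adj (a, z) (a', u) := by
          rw [lexProd, SimpleGraph.fromRel_adj]
          exact ⟨by simp [hGa.ne], Or.inl (Or.inl hGa)⟩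
        exact hproper _ _ hadj (hz.trans hw2.symm)
      rcases hrel with (hGa | ⟨ha, hH⟩) | (hGa | ⟨ha, hH⟩)
      · exact absurd hGa hGcase
      · subst ha; exact ⟨u, Or.inr hH, key u hw2⟩
      · exact absurd hGa.symm hGcase
      · subst ha; exact ⟨u, Or.inr hH.symm, key u hw2⟩
end

section
/- Let G and H be graphs with Fall(G) ≠ ∅ and Fall(H) ≠ ∅. If s ∈ Fall(G) and k_1, …, k_s ∈ Fall(H), then k_1 + k_2 + ⋯ + k_s ∈ Fall(G[H]). In other words, { Σ_{i=1}^s k_i : s ∈ Fall(G), each k_i ∈ Fall(H) } ⊆ Fall(G[H]). -/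
open SimpleGraph

/-- sums of fall colorings lift to the lexicographic product. -/
theorem sum_mem_fall_lexProd {α β : Type*} (G : SimpleGraph α) (H : SimpleGraph β)
    (hG : (Fall G).Nonempty) (hH : (Fall H).Nonempty)
    (s : ℕ) (hs : s ∈ Fall G) (k : Fin s → ℕ) (hk : ∀ i, k i ∈ Fall H) :
    (∑ i, k i) ∈ Fall (lexProd G H) := by
  obtain ⟨hspos, f, hf1, hf2⟩ := hs
  choose g hg1 hg2 using fun i => (hk i).2
  have hpos : 0 < ∑ i, k i := by
    obtain ⟨i⟩ : Nonempty (Fin s) := ⟨⟨0, hspos⟩⟩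
    exact Finset.sum_pos' (fun j _ => Nat.zero_le _) ⟨i, Finset.mem_univ i, (hk i).1⟩
  have e : (Σ i : Fin s, Fin (k i)) ≃ Fin (∑ i, k i) :=
    Fintype.equivFinOfCardEq (by simp)
  refine ⟨hpos, fun p => e ⟨f p.1, g (f p.1) p.2⟩, ?_, ?_⟩
  · rintro ⟨x1, y1⟩ ⟨x2, y2⟩ hadj hc
    have hsig : (⟨f x1, g (f x1) y1⟩ : Σ i : Fin s, Fin (k i)) = ⟨f x2, g (f x2) y2⟩ :=
      e.injective hc
    rw [lexProd, fromRel_adj] at hadj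
    obtain ⟨hne, hrel⟩ := hadj
    have hfx : f x1 = f x2 := congrArg Sigma.fst hsig
    have hGcase : ¬ G.Adj x1 x2 := fun h => hf1 _ _ h hfx
    have hx : x1 = x2 := by
      rcases hrel with (h | ⟨h, _⟩) | (h | ⟨h, _⟩)
      · exact absurd h hGcase
      · exact h
      · exact absurd h.symm hGcase
      · exact h.symm
    subst hx
    have hy : y1 ≠ y2 := fun h => hne (by rw [h])
    have hH' : H.Adj y1 y2 := by
      rcases hrel with (h | ⟨_, h⟩) | (h | ⟨_, h⟩)
      · exact absurd h hGcase
      · exact h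
      · exact absurd h hGcase
      · exact h.symm
    have h2 : HEq (g (f x1) y1) (g (f x1) y2) := (Sigma.mk.inj_iff.mp hsig).2
    exact hg1 (f x1) _ _ hH' (eq_of_heq h2)
  · rintro ⟨x, y⟩ c
    obtain ⟨⟨i, c'⟩, rfl⟩ := e.surjective c
    obtain ⟨u, hu, hfu⟩ := hf2 x i
    subst hfu
    obtain ⟨w, hw, hgw⟩ := hg2 (f u) y c'
    refine ⟨(u, w), ?_, ?_⟩
    · rcases hu with rfl | hGadj
      · rcases hw with rfl | hHadj
        · exact Or.inl rfl
        · refine Or.inr ?_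
          rw [lexProd, fromRel_adj]
          exact ⟨fun h => hHadj.ne (congrArg Prod.snd h), Or.inl (Or.inr ⟨rfl, hHadj⟩)⟩
      · refine Or.inr ?_
        rw [lexProd, fromRel_adj]
        exact ⟨fun h => hGadj.ne (congrArg Prod.fst h), Or.inl (Or.inl hGadj)⟩
    · show e ⟨f u, g (f u) w⟩ = e ⟨f u, c'⟩
      rw [hgw]
end

section
/- If G and H are graphs with Fall(G) ≠ ∅ and Fall(H) ≠ ∅, then χ_f(G[H]) ≤ χ_f(G)·χ_f(H) and ψ_f(G)·ψ_f(H) ≤ ψ_f(G[H]), where χ_f and ψ_f denote the minimum and maximum elements of the Fall set respectively. -/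
open SimpleGraph

lemma mem_fall_lexProd {α β : Type*} {G : SimpleGraph α} {H : SimpleGraph β} {k l : ℕ}
    (hk : k ∈ Fall G) (hl : l ∈ Fall H) : k * l ∈ Fall (lexProd G H) := by
  obtain ⟨hk0, f, hf1, hf2⟩ := hk
  obtain ⟨hl0, g, hg1, hg2⟩ := hl
  refine ⟨Nat.mul_pos hk0 hl0, fun p => finProdFinEquiv (f p.1, g p.2), ?_, ?_⟩
  · intro p q hadj heq
    rw [lexProd, SimpleGraph.fromRel_adj] at hadj
    obtain ⟨hne, hrel⟩ := hadj
    have h2 : (f p.1, g p.2) = (f q.1, g q.2) := finProdFinEquiv.injective heq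
    have hfe : f p.1 = f q.1 := congrArg Prod.fst h2
    have hge : g p.2 = g q.2 := congrArg Prod.snd h2
    rcases hrel with (h | ⟨he, h⟩) | (h | ⟨he, h⟩)
    · exact hf1 _ _ h hfe
    · exact hg1 _ _ h hge
    · exact hf1 _ _ h.symm hfe
    · exact hg1 _ _ h hge.symm
  · rintro ⟨x, y⟩ c
    set c1 := (finProdFinEquiv.symm c).1 with hc1def
    set c2 := (finProdFinEquiv.symm c).2 with hc2def
    have hcc : finProdFinEquiv (c1, c2) = c := by
      rw [hc1def, hc2def]
      simpa using finProdFinEquiv.apply_symm_apply c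
    by_cases hc1 : c1 = f x
    · obtain ⟨u, hu, hgu⟩ := hg2 y c2
      refine ⟨(x, u), ?_, ?_⟩
      · rcases hu with rfl | hadj
        · exact Or.inl rfl
        · refine Or.inr ?_
          rw [lexProd, SimpleGraph.fromRel_adj]
          refine ⟨fun h => H.ne_of_adj hadj ?_, Or.inl (Or.inr ⟨rfl, hadj⟩)⟩
          injection h.symm with h1 h2
          exact h2.symm
      · rw [← hcc]
        simp [hgu, hc1]
    · obtain ⟨u, hu, hfu⟩ := hf2 x c1
      have hadj : G.Adj x u := by
        rcases hu with rfl | h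
        · exact absurd hfu.symm hc1
        · exact h
      obtain ⟨w, hw, hgw⟩ := hg2 y c2
      refine ⟨(u, w), Or.inr ?_, ?_⟩
      · rw [lexProd, SimpleGraph.fromRel_adj]
        refine ⟨fun h => G.ne_of_adj hadj ?_, Or.inr (Or.inl hadj.symm)⟩
        injection h.symm with h1 h2
        exact h1.symm
      · rw [← hcc]
        simp [hfu, hgw]

lemma fall_le_card {α : Type*} [Fintype α] [Nonempty α] {G : SimpleGraph α} {k : ℕ}
    (hk : k ∈ Fall G) : k ≤ Fintype.card α := by
  obtain ⟨hk0, f, hf1, hf2⟩ := hk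
  have hsurj : Function.Surjective f := by
    intro c
    obtain ⟨v⟩ := ‹Nonempty α›
    obtain ⟨u, _, hu⟩ := hf2 v c
    exact ⟨u, hu⟩
  simpa using Fintype.card_le_of_surjective f hsurj

lemma fall_unbounded {α : Type*} [IsEmpty α] (G : SimpleGraph α) :
    ¬ BddAbove (Fall G) := by
  rintro ⟨b, hb⟩
  have : b + 1 ∈ Fall G :=
    ⟨Nat.succ_pos b, fun v => isEmptyElim v, fun u v h => isEmptyElim u,
      fun v => isEmptyElim v⟩
  exact Nat.not_succ_le_self b (hb this)

/-- fall chromatic and achromatic bounds for the lexicographic product. -/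
theorem fall_lexProd_bounds {α β : Type*} [Fintype α] [Fintype β]
    (G : SimpleGraph α) (H : SimpleGraph β)
    (hG : (Fall G).Nonempty) (hH : (Fall H).Nonempty) :
    sInf (Fall (lexProd G H)) ≤ sInf (Fall G) * sInf (Fall H) ∧
    sSup (Fall G) * sSup (Fall H) ≤ sSup (Fall (lexProd G H)) := by
  constructor
  · exact Nat.sInf_le (mem_fall_lexProd (Nat.sInf_mem hG) (Nat.sInf_mem hH))
  · by_cases hα : Nonempty α
    · by_cases hβ : Nonempty β
      · have : Nonempty (α × β) := ⟨hα.some, hβ.some⟩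
        have bddG : BddAbove (Fall G) := ⟨Fintype.card α, fun k hk => fall_le_card hk⟩
        have bddH : BddAbove (Fall H) := ⟨Fintype.card β, fun k hk => fall_le_card hk⟩
        have bddGH : BddAbove (Fall (lexProd G H)) :=
          ⟨Fintype.card (α × β), fun k hk => fall_le_card hk⟩
        exact le_csSup bddGH
          (mem_fall_lexProd (Nat.sSup_mem hG bddG) (Nat.sSup_mem hH bddH))
      · have : IsEmpty β := not_nonempty_iff.mp hβ
        have h0 : sSup (Fall H) = 0 := by
          rw [csSup_of_not_bddAbove (fall_unbounded H), csSup_empty]; rfl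
        simp [h0]
    · have : IsEmpty α := not_nonempty_iff.mp hα
      have h0 : sSup (Fall G) = 0 := by
        rw [csSup_of_not_bddAbove (fall_unbounded G), csSup_empty]; rfl
      simp [h0]
end

section
/- If f1 is a type-II graph homomorphism from G1 to G2 and f2 is a surjective type-II graph homomorphism from H1 to H2, then the map (g,h) ↦ (f1(g), f2(h)) is a type-II graph homomorphism from G1[H1] to G2[H2]. -/
open SimpleGraph

/-- type-II homomorphisms and lexicographic products. -/
theorem isTypeII_lexProd {α₁ α₂ β₁ β₂ : Type*}
    (G₁ : SimpleGraph α₁) (G₂ : SimpleGraph α₂) (H₁ : SimpleGraph β₁) (H₂ : SimpleGraph β₂)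
    (f₁ : α₁ → α₂) (f₂ : β₁ → β₂)
    (hf₁ : IsTypeII G₁ G₂ f₁) (hf₂ : IsTypeII H₁ H₂ f₂) (hsurj : Function.Surjective f₂) :
    IsTypeII (lexProd G₁ H₁) (lexProd G₂ H₂) (fun p => (f₁ p.1, f₂ p.2)) := by
  obtain ⟨h₁a, h₁b⟩ := hf₁
  obtain ⟨h₂a, h₂b⟩ := hf₂
  constructor
  · rintro u v ⟨hne, h | h⟩
    · rcases h with h | ⟨he, h⟩
      · have := h₁a _ _ h
        exact ⟨fun hc => this.ne (congrArg Prod.fst hc), Or.inl (Or.inl this)⟩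
      · have := h₂a _ _ h
        exact ⟨fun hc => this.ne (congrArg Prod.snd hc),
          Or.inl (Or.inr ⟨congrArg f₁ he, this⟩)⟩
    · rcases h with h | ⟨he, h⟩
      · have := h₁a _ _ h
        exact ⟨fun hc => this.ne (congrArg Prod.fst hc).symm, Or.inr (Or.inl this)⟩
      · have := h₂a _ _ h
        exact ⟨fun hc => this.ne (congrArg Prod.snd hc).symm,
          Or.inr (Or.inr ⟨congrArg f₁ he, this⟩)⟩
  · rintro u₁ v₁ ⟨hne, hadj⟩ v hv
    have hadj' : G₂.Adj u₁.1 v₁.1 ∨ (u₁.1 = v₁.1 ∧ H₂.Adj u₁.2 v₁.2) := by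
      rcases hadj with h | h
      · exact h
      · rcases h with h | ⟨he, h⟩
        · exact Or.inl h.symm
        · exact Or.inr ⟨he.symm, h.symm⟩
    rcases hadj' with h | ⟨he, h⟩
    · have hv1 : f₁ v.1 = v₁.1 := congrArg Prod.fst hv
      obtain ⟨a, ha, hadjG⟩ := h₁b _ _ h v.1 hv1
      obtain ⟨b, hb⟩ := hsurj u₁.2
      refine ⟨(a, b), ?_, ?_, Or.inl (Or.inl hadjG)⟩
      · simp [ha, hb]
      · intro hc
        exact hadjG.ne (congrArg Prod.fst hc)
    · have hv2 : f₂ v.2 = v₁.2 := congrArg Prod.snd hv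
      obtain ⟨b, hb, hadjH⟩ := h₂b _ _ h v.2 hv2
      refine ⟨(v.1, b), ?_, ?_, Or.inl (Or.inr ⟨rfl, hadjH⟩)⟩
      · have hv1 : f₁ v.1 = v₁.1 := congrArg Prod.fst hv
        simp only [hb, hv1, he]
        exact Prod.ext he.symm rfl
      · intro hc
        exact hadjH.ne (congrArg Prod.snd hc)
end

section
/- If there exists a type-II graph homomorphism from G to H and k ∈ Fall(H), then k ∈ Fall(G). -/
open SimpleGraph

/-- type-II homomorphisms pull back fall colorings. -/
theorem mem_fall_of_isTypeII {α β : Type*}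
    (G : SimpleGraph α) (H : SimpleGraph β) (f : α → β)
    (hf : IsTypeII G H f) (k : ℕ) (hk : k ∈ Fall H) : k ∈ Fall G := by
  obtain ⟨hk0, g, hg1, hg2⟩ := hk
  refine ⟨hk0, g ∘ f, fun u v huv => hg1 _ _ (hf.1 u v huv), fun v c => ?_⟩
  obtain ⟨u, hu | hu, hc⟩ := hg2 (f v) c
  · exact ⟨v, Or.inl rfl, by simp [← hu, hc]⟩
  · obtain ⟨w, hw, hwv⟩ := hf.2 u (f v) hu.symm v rfl
    exact ⟨w, Or.inr hwv.symm, by simp [hw, hc]⟩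
end

section
/- The map f : V(C_5 × C_5) → [5] defined on vertex pairs (i,j) with i,j ∈ {0,1,2,3,4} by f((i,j)) = ((i + 2j) mod 5) + 1 is a fall 5-coloring of the categorical product C_5 × C_5. In particular, Fall(C_5 × C_5) ≠ ∅ even though Fall(C_5) = ∅. -/
open SimpleGraph

instance {α β : Type*} (G : SimpleGraph α) (H : SimpleGraph β)
    [DecidableEq α] [DecidableEq β] [DecidableRel G.Adj] [DecidableRel H.Adj] :
    DecidableRel (tensorProd G H).Adj :=
  fun _ _ => inferInstanceAs (Decidable (_ ∧ _))

lemma part1 : IsFallColoring (tensorProd (SimpleGraph.cycleGraph 5) (SimpleGraph.cycleGraph 5))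
      (fun p : Fin 5 × Fin 5 => p.1 + 2 * p.2) := by
  constructor <;> decide

lemma c5_le3 {k : ℕ} (f : Fin 5 → Fin k) (hf : IsFallColoring (SimpleGraph.cycleGraph 5) f) :
    k ≤ 3 := by
  have h := hf.2 0
  have hsurj : Function.Surjective
      (fun u : {u : Fin 5 // u = 0 ∨ (SimpleGraph.cycleGraph 5).Adj 0 u} => f u.1) := by
    intro c
    obtain ⟨u, hu, hfu⟩ := h c
    exact ⟨⟨u, hu⟩, hfu⟩
  have := Fintype.card_le_of_surjective _ hsurj
  simpa using this.trans (by decide : Fintype.card {u : Fin 5 // u = 0 ∨ (SimpleGraph.cycleGraph 5).Adj 0 u} ≤ 3)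

set_option maxRecDepth 4000 in
lemma part3 : Fall (SimpleGraph.cycleGraph 5) = ∅ := by
  ext k
  simp only [Set.mem_empty_iff_false, iff_false]
  rintro ⟨hk, f, hf⟩
  have h3 := c5_le3 f hf
  interval_cases k
  · exact (by unfold IsFallColoring; decide : ¬∃ f : Fin 5 → Fin 1, IsFallColoring (SimpleGraph.cycleGraph 5) f) ⟨f, hf⟩
  · exact (by unfold IsFallColoring; decide : ¬∃ f : Fin 5 → Fin 2, IsFallColoring (SimpleGraph.cycleGraph 5) f) ⟨f, hf⟩
  · exact (by unfold IsFallColoring; decide : ¬∃ f : Fin 5 → Fin 3, IsFallColoring (SimpleGraph.cycleGraph 5) f) ⟨f, hf⟩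

/-- (i,j) ↦ i + 2j (mod 5) is a fall 5-coloring of C₅ × C₅. -/
theorem fall_coloring_tensor_C5_C5 :
    IsFallColoring (tensorProd (SimpleGraph.cycleGraph 5) (SimpleGraph.cycleGraph 5))
      (fun p : Fin 5 × Fin 5 => p.1 + 2 * p.2) ∧
    (Fall (tensorProd (SimpleGraph.cycleGraph 5) (SimpleGraph.cycleGraph 5))).Nonempty ∧
    Fall (SimpleGraph.cycleGraph 5) = ∅ := by
  refine ⟨part1, ⟨5, by norm_num, _, part1⟩, part3⟩
end

section
/- Let G be a graph and 1 ≤ t ≤ δ(G)+1, where δ(G) is the minimum degree. Then G has a fall t-coloring if and only if there exists a graph H obtained from G by, for each vertex v, choosing t−1 vertices in N_G(v) and adding edges making these t−1 vertices pairwise adjacent, such that χ(H) = t. -/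
open SimpleGraph

/-- Auxiliary: a clique of the auxiliary graph obtained by inserting `v` into `S v`. -/
lemma aux_clique {α : Type*} [DecidableEq α] (G : SimpleGraph α) (S : α → Finset α)
    (hS1 : ∀ v, ∀ u ∈ S v, G.Adj v u) (v : α) :
    (SimpleGraph.fromRel fun x y =>
      G.Adj x y ∨ ∃ w, x ∈ S w ∧ y ∈ S w).IsClique (insert v (S v) : Finset α) := by
  intro x hx y hy hxy
  simp only [Finset.coe_insert, Set.mem_insert_iff, Finset.mem_coe] at hx hy
  rw [SimpleGraph.fromRel_adj]
  refine ⟨hxy, ?_⟩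
  rcases hx with rfl | hx
  · rcases hy with rfl | hy
    · exact absurd rfl hxy
    · exact Or.inl (Or.inl (hS1 x y hy))
  · rcases hy with rfl | hy
    · exact Or.inr (Or.inl (hS1 y x hx))
    · exact Or.inl (Or.inr ⟨v, hx, hy⟩)

/-- fall t-colorings of G reduce to proper t-colorings of graphs
obtained from G by making, for each vertex, t-1 chosen neighbors pairwise adjacent. -/
theorem mem_fall_iff_chromatic {α : Type*} [Fintype α] [Nonempty α]
    (G : SimpleGraph α) [DecidableRel G.Adj] (t : ℕ)
    (ht1 : 1 ≤ t) (ht2 : t ≤ G.minDegree + 1) :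
    t ∈ Fall G ↔
      ∃ S : α → Finset α, (∀ v, S v ⊆ G.neighborFinset v) ∧ (∀ v, (S v).card = t - 1) ∧
        (SimpleGraph.fromRel fun x y =>
          G.Adj x y ∨ ∃ v, x ∈ S v ∧ y ∈ S v).chromaticNumber = (t : ℕ∞) := by
  classical
  constructor
  · rintro ⟨-, f, hf1, hf2⟩
    choose g hg1 hg2 using hf2
    set S : α → Finset α := fun v => (Finset.univ.erase (f v)).image (g v) with hSdef
    have hgadj : ∀ v (c : Fin t), c ≠ f v → G.Adj v (g v c) := by
      intro v c hc
      rcases hg1 v c with h | h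
      · exact absurd ((congrArg f h).symm.trans (hg2 v c)) (Ne.symm hc)
      · exact h
    have hS1 : ∀ v, S v ⊆ G.neighborFinset v := by
      intro v u hu
      simp only [hSdef, Finset.mem_image, Finset.mem_erase] at hu
      obtain ⟨c, ⟨hc, -⟩, rfl⟩ := hu
      exact (G.mem_neighborFinset v _).mpr (hgadj v c hc)
    have hmemS : ∀ v x, x ∈ S v → f x ≠ f v ∧ g v (f x) = x := by
      intro v x hx
      simp only [hSdef, Finset.mem_image, Finset.mem_erase] at hx
      obtain ⟨c, ⟨hc, -⟩, rfl⟩ := hx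
      rw [hg2 v c]
      exact ⟨hc, rfl⟩
    refine ⟨S, hS1, ?_, ?_⟩
    · intro v
      rw [hSdef]
      rw [Finset.card_image_of_injOn, Finset.card_erase_of_mem (Finset.mem_univ _),
        Finset.card_univ, Fintype.card_fin]
      intro c _ c' _ h
      rw [← hg2 v c, ← hg2 v c', h]
    · set H := SimpleGraph.fromRel fun x y =>
        G.Adj x y ∨ ∃ v, x ∈ S v ∧ y ∈ S v with hHdef
      have hcol : H.Colorable t := by
        refine ⟨SimpleGraph.Coloring.mk f ?_⟩
        intro x y hxy
        rw [hHdef, SimpleGraph.fromRel_adj] at hxy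
        obtain ⟨hne, h⟩ := hxy
        intro hfeq
        rcases h with (h | ⟨v, hx, hy⟩) | (h | ⟨v, hy, hx⟩)
        · exact hf1 x y h hfeq
        · obtain ⟨-, hx'⟩ := hmemS v x hx
          obtain ⟨-, hy'⟩ := hmemS v y hy
          exact hne (by rw [← hx', ← hy', hfeq])
        · exact hf1 y x h hfeq.symm
        · obtain ⟨-, hx'⟩ := hmemS v x hx
          obtain ⟨-, hy'⟩ := hmemS v y hy
          exact hne (by rw [← hx', ← hy', hfeq])
      obtain ⟨v⟩ := ‹Nonempty α›
      have hvS : v ∉ S v := fun h => G.notMem_neighborFinset_self v (hS1 v h)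
      have hclique := aux_clique G S (fun w u hu => (G.mem_neighborFinset w u).mp (hS1 w hu)) v
      have hcard : (insert v (S v) : Finset α).card = t := by
        rw [Finset.card_insert_of_notMem hvS]
        have : (S v).card = t - 1 := by
          rw [hSdef]
          rw [Finset.card_image_of_injOn, Finset.card_erase_of_mem (Finset.mem_univ _),
            Finset.card_univ, Fintype.card_fin]
          intro c _ c' _ h
          rw [← hg2 v c, ← hg2 v c', h]
        omega
      have hle : H.chromaticNumber ≤ (t : ℕ∞) :=
        SimpleGraph.chromaticNumber_le_iff_colorable.mpr hcol
      have hge : (t : ℕ∞) ≤ H.chromaticNumber := by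
        have := hclique.card_le_chromaticNumber
        rwa [hcard] at this
      exact le_antisymm hle hge
  · rintro ⟨S, hS1, hS2, hS3⟩
    set H := SimpleGraph.fromRel fun x y =>
      G.Adj x y ∨ ∃ v, x ∈ S v ∧ y ∈ S v with hHdef
    have hcol : H.Colorable t :=
      SimpleGraph.chromaticNumber_le_iff_colorable.mp (le_of_eq hS3)
    obtain ⟨C⟩ := hcol
    refine ⟨ht1, fun a => C a, ?_, ?_⟩
    · intro u w huw
      exact C.valid (by
        rw [hHdef, SimpleGraph.fromRel_adj]
        exact ⟨huw.ne, Or.inl (Or.inl huw)⟩)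
    · intro v c
      have hvS : v ∉ S v := fun h => G.notMem_neighborFinset_self v (hS1 v h)
      have hclique := aux_clique G S (fun w u hu => (G.mem_neighborFinset w u).mp (hS1 w hu)) v
      have hcard : (insert v (S v) : Finset α).card = t := by
        rw [Finset.card_insert_of_notMem hvS, hS2 v]; omega
      have hinj : Set.InjOn (fun a => C a) ((insert v (S v) : Finset α) : Set α) := by
        intro x hx y hy h
        by_contra hne
        exact C.valid (hclique hx hy hne) h
      have himg : ((insert v (S v) : Finset α).image (fun a => C a)) = Finset.univ := by
        apply Finset.eq_univ_of_card
        rw [Finset.card_image_of_injOn hinj, hcard, Fintype.card_fin]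
      have hc : c ∈ (insert v (S v) : Finset α).image (fun a => C a) := by
        rw [himg]; exact Finset.mem_univ c
      obtain ⟨u, hu, hcu⟩ := Finset.mem_image.mp hc
      rcases Finset.mem_insert.mp hu with rfl | hu
      · exact ⟨u, Or.inl rfl, hcu⟩
      · exact ⟨u, Or.inr ((G.mem_neighborFinset v u).mp (hS1 v hu)), hcu⟩
end

section
/- For every graph G, the Mycielskian M(G) has no fall k-coloring for any positive integer k: Fall(M(G)) = ∅. -/
open SimpleGraph

/-- The Mycielskian of a graph. -/
def mycielskian {α : Type*} (G : SimpleGraph α) : SimpleGraph (α ⊕ α ⊕ Unit) :=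
  SimpleGraph.fromRel (fun a b =>
    (∃ x y, a = Sum.inl x ∧ b = Sum.inl y ∧ G.Adj x y) ∨
    (∃ x y, a = Sum.inl x ∧ b = Sum.inr (Sum.inl y) ∧ G.Adj x y) ∨
    (∃ y, a = Sum.inr (Sum.inl y) ∧ b = Sum.inr (Sum.inr ())))

lemma myc_adj_iff {α : Type*} (G : SimpleGraph α) (a b : α ⊕ α ⊕ Unit) :
    (mycielskian G).Adj a b ↔
      (∃ x y, a = Sum.inl x ∧ b = Sum.inl y ∧ G.Adj x y) ∨
      (∃ x y, a = Sum.inl x ∧ b = Sum.inr (Sum.inl y) ∧ G.Adj x y) ∨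
      (∃ x y, a = Sum.inr (Sum.inl x) ∧ b = Sum.inl y ∧ G.Adj y x) ∨
      (∃ x, a = Sum.inr (Sum.inl x) ∧ b = Sum.inr (Sum.inr ())) ∨
      (∃ x, a = Sum.inr (Sum.inr ()) ∧ b = Sum.inr (Sum.inl x)) := by
  rw [mycielskian, SimpleGraph.fromRel_adj]
  constructor
  · rintro ⟨hne, h | h⟩
    · rcases h with ⟨x, y, rfl, rfl, hxy⟩ | ⟨x, y, rfl, rfl, hxy⟩ | ⟨y, rfl, rfl⟩
      · exact Or.inl ⟨x, y, rfl, rfl, hxy⟩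
      · exact Or.inr (Or.inl ⟨x, y, rfl, rfl, hxy⟩)
      · exact Or.inr (Or.inr (Or.inr (Or.inl ⟨y, rfl, rfl⟩)))
    · rcases h with ⟨x, y, rfl, rfl, hxy⟩ | ⟨x, y, rfl, rfl, hxy⟩ | ⟨y, rfl, rfl⟩
      · exact Or.inl ⟨y, x, rfl, rfl, hxy.symm⟩
      · exact Or.inr (Or.inr (Or.inl ⟨y, x, rfl, rfl, hxy⟩))
      · exact Or.inr (Or.inr (Or.inr (Or.inr ⟨y, rfl, rfl⟩)))
  · rintro (⟨x, y, rfl, rfl, hxy⟩ | ⟨x, y, rfl, rfl, hxy⟩ | ⟨x, y, rfl, rfl, hxy⟩ |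
      ⟨x, rfl, rfl⟩ | ⟨x, rfl, rfl⟩)
    · exact ⟨by simp [hxy.ne], Or.inl (Or.inl ⟨x, y, rfl, rfl, hxy⟩)⟩
    · exact ⟨by simp, Or.inl (Or.inr (Or.inl ⟨x, y, rfl, rfl, hxy⟩))⟩
    · exact ⟨by simp, Or.inr (Or.inr (Or.inl ⟨y, x, rfl, rfl, hxy⟩))⟩
    · exact ⟨by simp, Or.inl (Or.inr (Or.inr ⟨x, rfl, rfl⟩))⟩
    · exact ⟨by simp, Or.inr (Or.inr (Or.inr ⟨x, rfl, rfl⟩))⟩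

/-- the Mycielskian of any graph has no fall coloring. -/
theorem fall_mycielskian_empty {α : Type*} [Nonempty α] (G : SimpleGraph α) :
    Fall (mycielskian G) = ∅ := by
  ext k
  simp only [Set.mem_empty_iff_false, iff_false]
  rintro ⟨hk, f, hprop, hfall⟩
  set X : α → α ⊕ α ⊕ Unit := fun a => Sum.inl a with hX
  set Y : α → α ⊕ α ⊕ Unit := fun a => Sum.inr (Sum.inl a) with hY
  set Z : α ⊕ α ⊕ Unit := Sum.inr (Sum.inr ()) with hZ
  set c : Fin k := f Z with hc
  -- every Y-vertex avoids color c
  have hYc : ∀ a, f (Y a) ≠ c := by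
    intro a
    exact hprop (Y a) Z ((myc_adj_iff G _ _).2 (Or.inr (Or.inr (Or.inr (Or.inl ⟨a, rfl, rfl⟩)))))
  -- claim A: for each a, f (X a) = c or f (X a) = f (Y a)
  have claimA : ∀ a, f (X a) = c ∨ f (X a) = f (Y a) := by
    intro a
    obtain ⟨u, hu, hfu⟩ := hfall (Y a) (f (X a))
    rcases hu with rfl | hadj
    · exact Or.inr hfu.symm
    · rw [myc_adj_iff] at hadj
      rcases hadj with ⟨x, y, hx, _, _⟩ | ⟨x, y, hx, _, _⟩ | ⟨x, y, hx, rfl, hxy⟩ |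
        ⟨x, _, rfl⟩ | ⟨x, hx, _⟩
      · exact absurd hx (by simp [Y])
      · exact absurd hx (by simp [Y])
      · -- u = X y with G.Adj y x, x = a; contradicts properness X y ~ X a
        obtain rfl : a = x := by simpa [Y] using hx
        exact absurd hfu (hprop (X y) (X a)
          ((myc_adj_iff G _ _).2 (Or.inl ⟨y, a, rfl, rfl, hxy⟩)))
      · exact Or.inl hfu.symm
      · exact absurd hx (by simp [Y])
  -- there is some a with f (X a) = c
  obtain ⟨a₀⟩ := ‹Nonempty α›
  have hexists : ∃ a, f (X a) = c := by
    obtain ⟨u, hu, hfu⟩ := hfall (X a₀) c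
    rcases hu with rfl | hadj
    · exact ⟨a₀, hfu⟩
    · rw [myc_adj_iff] at hadj
      rcases hadj with ⟨x, y, hx, rfl, _⟩ | ⟨x, y, hx, rfl, _⟩ | ⟨x, y, hx, _, _⟩ |
        ⟨x, hx, _⟩ | ⟨x, hx, _⟩
      · exact ⟨y, hfu⟩
      · exact absurd hfu (hYc y)
      · exact absurd hx (by simp [X])
      · exact absurd hx (by simp [X])
      · exact absurd hx (by simp [X])
  obtain ⟨a, ha⟩ := hexists
  -- let d be the color of Y a; d ≠ c
  set d : Fin k := f (Y a) with hd
  -- X a must see color d; derive a contradiction in every case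
  obtain ⟨u, hu, hfu⟩ := hfall (X a) d
  rcases hu with rfl | hadj
  · exact hYc a ((ha ▸ hfu).symm)
  · rw [myc_adj_iff] at hadj
    rcases hadj with ⟨x, y, hx, rfl, hxy⟩ | ⟨x, y, hx, rfl, hxy⟩ | ⟨x, y, hx, _, _⟩ |
      ⟨x, hx, _⟩ | ⟨x, hx, _⟩
    · -- u = X y, G.Adj x y, x = a; but X y adj Y a, so f (X y) ≠ d
      obtain rfl : a = x := by simpa [X] using hx
      exact hprop (X y) (Y a)
        ((myc_adj_iff G _ _).2 (Or.inr (Or.inl ⟨y, a, rfl, rfl, hxy.symm⟩))) hfu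
    · -- u = Y y, G.Adj x y, x = a; claimA on y: f (X y) = c impossible (adj X a),
      -- so f (X y) = f (Y y) = d, but X y adj Y a
      obtain rfl : a = x := by simpa [X] using hx
      have hXy : f (X y) ≠ c := by
        intro h
        exact hprop (X a) (X y)
          ((myc_adj_iff G _ _).2 (Or.inl ⟨a, y, rfl, rfl, hxy⟩)) (ha.trans h.symm)
      have hXyd : f (X y) = d := by
        rcases claimA y with h | h
        · exact absurd h hXy
        · exact h.trans hfu
      exact hprop (X y) (Y a)
        ((myc_adj_iff G _ _).2 (Or.inr (Or.inl ⟨y, a, rfl, rfl, hxy.symm⟩))) hXyd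
    · exact absurd hx (by simp [X])
    · exact absurd hx (by simp [X])
    · exact absurd hx (by simp [X])
end

section
/- Let G be a bipartite graph and G^c its complement. Then Fall(G^c) ⊆ {χ(G^c)}, and Fall(G^c) is nonempty if and only if the subgraph of G induced on its non-isolated vertices has a perfect matching; in that case Fall(G^c) = { |V(G)| − (1/2)·|{x ∈ V(G) : deg_G(x) > 0}| }. -/
open SimpleGraph Finset

open scoped Classical

section Aux

variable {α : Type*}

/-- 2-colorable graphs have no triangles. -/
private lemma no_tri {G : SimpleGraph α} (hbip : G.Colorable 2)
    {u v w : α} (h1 : G.Adj u v) (h2 : G.Adj u w) (h3 : G.Adj v w) : False := by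
  obtain ⟨c⟩ := hbip
  have a1 : (c u).val ≠ (c v).val := fun h => c.valid h1 (Fin.val_injective h)
  have a2 : (c u).val ≠ (c w).val := fun h => c.valid h2 (Fin.val_injective h)
  have a3 : (c v).val ≠ (c w).val := fun h => c.valid h3 (Fin.val_injective h)
  have b1 := (c u).isLt
  have b2 := (c v).isLt
  have b3 := (c w).isLt
  omega

/-- In a proper coloring of `Gᶜ`, same-colored vertices are equal or `G`-adjacent. -/
private lemma same_color {G : SimpleGraph α} {k : ℕ} {f : α → Fin k}
    (hf : ∀ u v, Gᶜ.Adj u v → f u ≠ f v) {u v : α} (h : f u = f v) : u = v ∨ G.Adj u v := by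
  by_contra hc
  push_neg at hc
  exact hf u v ((G.compl_adj u v).2 ⟨hc.1, hc.2⟩) h

variable [Fintype α]

/-- Counting fibers of a proper coloring of `Gᶜ` when `G` is bipartite. -/
private lemma fiber_ineq {G : SimpleGraph α} (hbip : G.Colorable 2)
    {k : ℕ} {f : α → Fin k} (hf : ∀ u v, Gᶜ.Adj u v → f u ≠ f v) (c : Fin k) :
    2 * (univ.filter fun v => f v = c).card ≤
      2 + ((univ.filter fun x : α => ∃ y, G.Adj x y).filter fun v => f v = c).card := by
  set s := univ.filter fun v => f v = c with hs
  have hmem : ∀ {v}, v ∈ s ↔ f v = c := by intro v; simp [hs]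
  rcases le_or_gt s.card 1 with h | h
  · omega
  · obtain ⟨u, hu, v, hv, huv⟩ := Finset.one_lt_card.1 h
    have hadj : G.Adj u v := (same_color hf ((hmem.1 hu).trans (hmem.1 hv).symm)).resolve_left huv
    have hsub : s ⊆ {u, v} := by
      intro w hw
      simp only [Finset.mem_insert, Finset.mem_singleton]
      by_contra hcon
      push_neg at hcon
      have h1 : G.Adj u w :=
        (same_color hf ((hmem.1 hu).trans (hmem.1 hw).symm)).resolve_left (Ne.symm hcon.1)
      have h2 : G.Adj v w :=
        (same_color hf ((hmem.1 hv).trans (hmem.1 hw).symm)).resolve_left (Ne.symm hcon.2)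
      exact no_tri hbip hadj h1 h2
    have hc2 : s.card ≤ 2 :=
      le_trans (Finset.card_le_card hsub) (le_trans (Finset.card_insert_le _ _) (by simp))
    have heq : (univ.filter fun x : α => ∃ y, G.Adj x y).filter (fun v => f v = c)
        = s.filter fun x => ∃ y, G.Adj x y := by
      simp only [Finset.filter_filter, hs]
      exact Finset.filter_congr (by intro x _; exact and_comm)
    have hni : s.filter (fun x => ∃ y, G.Adj x y) = s := by
      apply Finset.filter_true_of_mem
      intro w hw
      rcases Finset.mem_insert.1 (hsub hw) with rfl | hw'
      · exact ⟨v, hadj⟩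
      · rw [Finset.mem_singleton] at hw'
        subst hw'
        exact ⟨u, hadj.symm⟩
    rw [heq, hni]
    omega

/-- In a fall coloring of `Gᶜ`, every nonisolated vertex of `G` has a partner. -/
private lemma partner_exists {G : SimpleGraph α} {k : ℕ} {f : α → Fin k}
    (hf : IsFallColoring Gᶜ f) {u : α} (hu : ∃ y, G.Adj u y) :
    ∃ v, G.Adj u v ∧ f v = f u := by
  by_contra hcon
  push_neg at hcon
  obtain ⟨y, hy⟩ := hu
  obtain ⟨x, hx1, hx2⟩ := hf.2 y (f u)
  have hxu : x = u := by
    rcases same_color hf.1 hx2 with h | h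
    · exact h
    · exact absurd hx2 (hcon x h.symm)
  subst hxu
  rcases hx1 with rfl | h
  · exact G.irrefl hy
  · exact ((G.compl_adj y x).1 h).2 hy.symm

/-- Exact fiber counting for fall colorings of `Gᶜ`. -/
private lemma fiber_eq [Nonempty α] {G : SimpleGraph α} (hbip : G.Colorable 2)
    {k : ℕ} {f : α → Fin k} (hf : IsFallColoring Gᶜ f) (c : Fin k) :
    2 * (univ.filter fun v => f v = c).card =
      2 + ((univ.filter fun x : α => ∃ y, G.Adj x y).filter fun v => f v = c).card := by
  obtain ⟨u, -, hu⟩ := hf.2 (Classical.arbitrary α) c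
  set s := univ.filter fun v => f v = c with hs
  have hmem : ∀ {v}, v ∈ s ↔ f v = c := by intro v; simp [hs]
  have heq : (univ.filter fun x : α => ∃ y, G.Adj x y).filter (fun v => f v = c)
      = s.filter fun x => ∃ y, G.Adj x y := by
    simp only [Finset.filter_filter, hs]
    exact Finset.filter_congr (by intro x _; exact and_comm)
  rw [heq]
  by_cases hiso : ∃ y, G.Adj u y
  · obtain ⟨v, hadj, hvc⟩ := partner_exists hf hiso
    have hvc' : f v = c := hvc.trans hu
    have hsv : s = {u, v} := by
      apply Finset.Subset.antisymm
      · intro w hw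
        simp only [Finset.mem_insert, Finset.mem_singleton]
        by_contra hcon
        push_neg at hcon
        have h1 : G.Adj u w :=
          (same_color hf.1 (hu.trans (hmem.1 hw).symm)).resolve_left (Ne.symm hcon.1)
        have h2 : G.Adj v w :=
          (same_color hf.1 (hvc'.trans (hmem.1 hw).symm)).resolve_left (Ne.symm hcon.2)
        exact no_tri hbip hadj h1 h2
      · intro w hw
        rcases Finset.mem_insert.1 hw with rfl | hw'
        · exact hmem.2 hu
        · rw [Finset.mem_singleton] at hw'; subst hw'; exact hmem.2 hvc'
    have hni : s.filter (fun x => ∃ y, G.Adj x y) = s := by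
      apply Finset.filter_true_of_mem
      intro w hw
      rw [hsv] at hw
      rcases Finset.mem_insert.1 hw with rfl | hw'
      · exact ⟨v, hadj⟩
      · rw [Finset.mem_singleton] at hw'; subst hw'; exact ⟨u, hadj.symm⟩
    have hcard : s.card = 2 := by
      rw [hsv]
      rw [Finset.card_insert_of_notMem (by simp [hadj.ne]), Finset.card_singleton]
    rw [hni, hcard]
  · have hsv : s = {u} := by
      apply Finset.Subset.antisymm
      · intro w hw
        rw [Finset.mem_singleton]
        rcases same_color hf.1 ((hmem.1 hw).trans hu.symm) with h | h
        · exact h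
        · exact absurd ⟨w, h.symm⟩ hiso
      · intro w hw
        rw [Finset.mem_singleton] at hw; subst hw; exact hmem.2 hu
    have hni : s.filter (fun x => ∃ y, G.Adj x y) = ∅ := by
      rw [Finset.filter_eq_empty_iff]
      intro w hw
      rw [hsv, Finset.mem_singleton] at hw
      subst hw
      exact hiso
    rw [hni, hsv, Finset.card_singleton, Finset.card_empty]

/-- The global count for a fall coloring of `Gᶜ`. -/
private lemma fall_card [Nonempty α] {G : SimpleGraph α} (hbip : G.Colorable 2)
    {k : ℕ} (hk : k ∈ Fall Gᶜ) :
    2 * Fintype.card α =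
      2 * k + (univ.filter fun x : α => ∃ y, G.Adj x y).card := by
  obtain ⟨hk0, f, hf⟩ := hk
  have h1 : Fintype.card α = ∑ c : Fin k, (univ.filter fun v => f v = c).card := by
    rw [← Finset.card_univ]
    exact Finset.card_eq_sum_card_fiberwise fun x _ => Finset.mem_univ (f x)
  have h2 : (univ.filter fun x : α => ∃ y, G.Adj x y).card
      = ∑ c : Fin k, ((univ.filter fun x : α => ∃ y, G.Adj x y).filter fun v => f v = c).card :=
    Finset.card_eq_sum_card_fiberwise fun x _ => Finset.mem_univ (f x)
  calc 2 * Fintype.card α = ∑ c : Fin k, 2 * (univ.filter fun v => f v = c).card := by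
        rw [h1, Finset.mul_sum]
    _ = ∑ c : Fin k,
        (2 + ((univ.filter fun x : α => ∃ y, G.Adj x y).filter fun v => f v = c).card) :=
        Finset.sum_congr rfl fun c _ => fiber_eq hbip hf c
    _ = 2 * k + (univ.filter fun x : α => ∃ y, G.Adj x y).card := by
        rw [Finset.sum_add_distrib, ← h2, Finset.sum_const, Finset.card_univ, Fintype.card_fin,
          smul_eq_mul, mul_comm]

/-- The global bound for a proper coloring of `Gᶜ`. -/
private lemma proper_card {G : SimpleGraph α} (hbip : G.Colorable 2)
    {j : ℕ} (g : Gᶜ.Coloring (Fin j)) :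
    2 * Fintype.card α ≤ 2 * j + (univ.filter fun x : α => ∃ y, G.Adj x y).card := by
  have hf : ∀ u v, Gᶜ.Adj u v → g u ≠ g v := fun u v h => g.valid h
  have h1 : Fintype.card α = ∑ c : Fin j, (univ.filter fun v => g v = c).card := by
    rw [← Finset.card_univ]
    exact Finset.card_eq_sum_card_fiberwise fun x _ => Finset.mem_univ (g x)
  have h2 : (univ.filter fun x : α => ∃ y, G.Adj x y).card
      = ∑ c : Fin j, ((univ.filter fun x : α => ∃ y, G.Adj x y).filter fun v => g v = c).card :=
    Finset.card_eq_sum_card_fiberwise fun x _ => Finset.mem_univ (g x)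
  calc 2 * Fintype.card α = ∑ c : Fin j, 2 * (univ.filter fun v => g v = c).card := by
        rw [h1, Finset.mul_sum]
    _ ≤ ∑ c : Fin j,
        (2 + ((univ.filter fun x : α => ∃ y, G.Adj x y).filter fun v => g v = c).card) :=
        Finset.sum_le_sum fun c _ => fiber_ineq hbip hf c
    _ = 2 * j + (univ.filter fun x : α => ∃ y, G.Adj x y).card := by
        rw [Finset.sum_add_distrib, ← h2, Finset.sum_const, Finset.card_univ, Fintype.card_fin,
          smul_eq_mul, mul_comm]

/-- From a fall coloring of `Gᶜ`, extract a perfect matching of the induced graph on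
nonisolated vertices. -/
private lemma matching_of_fall [Nonempty α] {G : SimpleGraph α} (hbip : G.Colorable 2)
    (h : (Fall Gᶜ).Nonempty) :
    ∃ M : (SimpleGraph.induce {x : α | ∃ y, G.Adj x y} G).Subgraph, M.IsPerfectMatching := by
  obtain ⟨k, hk0, f, hf⟩ := h
  refine ⟨⟨Set.univ, fun a b => G.Adj ↑a ↑b ∧ f ↑a = f ↑b,
    fun h => by simpa using h.1, fun _ => trivial,
    ⟨fun a b h => ⟨h.1.symm, h.2.symm⟩⟩⟩, ?_⟩
  rw [SimpleGraph.Subgraph.isPerfectMatching_iff]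
  intro v
  obtain ⟨w, hw1, hw2⟩ := partner_exists hf v.2
  refine ⟨⟨w, ⟨↑v, hw1.symm⟩⟩, ⟨hw1, hw2.symm⟩, ?_⟩
  rintro ⟨w', hw'⟩ ⟨ha1, ha2⟩
  apply Subtype.ext
  show w' = w
  by_contra hne
  have hadj : G.Adj w' w := (same_color hf.1 (ha2.symm.trans hw2.symm)).resolve_left hne
  exact no_tri hbip ha1 hw1 hadj

/-- A "smaller-representative" map associated with an involution. -/
private noncomputable def prep (p : α → α) : α → α :=
  fun u => if (Fintype.equivFin α (p u)).val < (Fintype.equivFin α u).val then p u else u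

private lemma prep_cases (p : α → α) (u : α) : prep p u = u ∨ prep p u = p u := by
  unfold prep
  split <;> simp

private lemma prep_p {p : α → α} (hpp : ∀ u, p (p u) = u) (u : α) :
    prep p (p u) = prep p u := by
  unfold prep
  rw [hpp u]
  rcases lt_trichotomy ((Fintype.equivFin α (p u)).val) ((Fintype.equivFin α u).val) with h | h | h
  · rw [if_neg (by omega), if_pos h]
  · have : p u = u := (Fintype.equivFin α).injective (Fin.val_injective h)
    simp [this]
  · rw [if_pos h, if_neg (by omega)]

private lemma prep_idem {p : α → α} (hpp : ∀ u, p (p u) = u) (u : α) :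
    prep p (prep p u) = prep p u := by
  rcases prep_cases p u with h | h
  · rw [h, h]
  · rw [h, prep_p hpp, ← h]

private lemma prep_eq {p : α → α} (hpp : ∀ u, p (p u) = u) {u v : α}
    (h : prep p u = prep p v) : v = u ∨ v = p u := by
  rcases prep_cases p u with h1 | h1 <;> rcases prep_cases p v with h2 | h2 <;>
    rw [h1] at h <;> rw [h2] at h
  · exact Or.inl h.symm
  · right; rw [h, hpp]
  · exact Or.inr h.symm
  · left
    have := congrArg p h
    rw [hpp, hpp] at this
    exact this.symm

/-- From a perfect matching on the nonisolated vertices, build a fall coloring of `Gᶜ`. -/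
private lemma fall_of_matching [Nonempty α] {G : SimpleGraph α} (hbip : G.Colorable 2)
    (h : ∃ M : (SimpleGraph.induce {x : α | ∃ y, G.Adj x y} G).Subgraph, M.IsPerfectMatching) :
    (Fall Gᶜ).Nonempty := by
  obtain ⟨M, hM⟩ := h
  rw [SimpleGraph.Subgraph.isPerfectMatching_iff] at hM
  have hpt' : ∀ v, ∃ w, M.Adj v w ∧ ∀ w', M.Adj v w' → w' = w := by
    intro v
    obtain ⟨w, hw, hu⟩ := hM v
    exact ⟨w, hw, hu⟩
  choose pt hpt1 hpt2 using hpt'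
  -- the pairing function
  let p : α → α := fun u => if h : u ∈ ({x : α | ∃ y, G.Adj x y} : Set α) then ↑(pt ⟨u, h⟩) else u
  have hp_iso : ∀ u, u ∉ ({x : α | ∃ y, G.Adj x y} : Set α) → p u = u := fun u h => dif_neg h
  have hp_mem : ∀ u (h : u ∈ ({x : α | ∃ y, G.Adj x y} : Set α)), p u = ↑(pt ⟨u, h⟩) := fun u h => dif_pos h
  have madj : ∀ {a b : ({x : α | ∃ y, G.Adj x y} : Set α)}, M.Adj a b → G.Adj ↑a ↑b := fun h => by
    simpa using M.adj_sub h
  have hp_adj : ∀ u (h : u ∈ ({x : α | ∃ y, G.Adj x y} : Set α)), G.Adj u (p u) := by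
    intro u h
    rw [hp_mem u h]
    exact madj (hpt1 ⟨u, h⟩)
  have hp_adj' : ∀ u, p u ≠ u → G.Adj u (p u) := by
    intro u hne
    by_cases h : u ∈ ({x : α | ∃ y, G.Adj x y} : Set α)
    · exact hp_adj u h
    · exact absurd (hp_iso u h) hne
  have hpp : ∀ u, p (p u) = u := by
    intro u
    by_cases h : u ∈ ({x : α | ∃ y, G.Adj x y} : Set α)
    · have h2 : p u ∈ ({x : α | ∃ y, G.Adj x y} : Set α) := ⟨u, (hp_adj u h).symm⟩
      rw [hp_mem (p u) h2]
      have he : (⟨p u, h2⟩ : ({x : α | ∃ y, G.Adj x y} : Set α)) = pt ⟨u, h⟩ := Subtype.ext (hp_mem u h)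
      have hadj : M.Adj ⟨p u, h2⟩ ⟨u, h⟩ := by
        rw [he]
        exact M.adj_symm (hpt1 ⟨u, h⟩)
      have := hpt2 ⟨p u, h2⟩ ⟨u, h⟩ hadj
      rw [← this]
    · rw [hp_iso u h, hp_iso u h]
  -- the set of representatives
  set S := {v : α // prep p v = v} with hS
  have hSne : Nonempty S := ⟨⟨prep p (Classical.arbitrary α), prep_idem hpp _⟩⟩
  let e : S ≃ Fin (Fintype.card S) := Fintype.equivFin S
  let f : α → Fin (Fintype.card S) := fun u => e ⟨prep p u, prep_idem hpp u⟩
  have hfeq : ∀ {u v : α}, f u = f v → prep p u = prep p v := by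
    intro u v h
    have := e.injective h
    exact congrArg Subtype.val this
  refine ⟨Fintype.card S, Fintype.card_pos, f, ?_, ?_⟩
  · -- proper
    intro u v hadj hcon
    obtain ⟨hne, hnadj⟩ := (G.compl_adj u v).1 hadj
    rcases prep_eq hpp (hfeq hcon) with rfl | rfl
    · exact hne rfl
    · exact hnadj (hp_adj' u (fun hcc => hne hcc.symm))
  · -- fall
    intro v c
    set w : α := ↑(e.symm c) with hw
    have hww : prep p w = w := (e.symm c).2
    have hfw : f w = c := by
      show e ⟨prep p w, _⟩ = c
      rw [show (⟨prep p w, prep_idem hpp w⟩ : S) = e.symm c from Subtype.ext hww]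
      exact e.apply_symm_apply c
    have hfpw : f (p w) = c := by
      show e ⟨prep p (p w), _⟩ = c
      rw [show (⟨prep p (p w), prep_idem hpp (p w)⟩ : S) = e.symm c from
        Subtype.ext ((prep_p hpp w).trans hww)]
      exact e.apply_symm_apply c
    by_cases h1 : G.Adj v w
    · by_cases h2 : G.Adj v (p w)
      · exfalso
        have hwne : p w ≠ w := by
          intro hcc
          by_cases hni : w ∈ ({x : α | ∃ y, G.Adj x y} : Set α)
          · exact G.irrefl (hcc ▸ hp_adj w hni)
          · exact hni ⟨v, h1.symm⟩
        exact no_tri hbip h1 h2 (hp_adj' w hwne)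
      · refine ⟨p w, ?_, hfpw⟩
        by_cases hcc : p w = v
        · exact Or.inl hcc
        · exact Or.inr ((G.compl_adj v (p w)).2 ⟨fun hh => hcc hh.symm, h2⟩)
    · refine ⟨w, ?_, hfw⟩
      by_cases hcc : w = v
      · exact Or.inl hcc
      · exact Or.inr ((G.compl_adj v w).2 ⟨fun hh => hcc hh.symm, h1⟩)

end Aux

/-- fall colorings of complements of bipartite graphs. -/
theorem fall_compl_bipartite {α : Type*} [Fintype α] [Nonempty α]
    (G : SimpleGraph α) (hbip : G.Colorable 2) :
    (∀ k ∈ Fall Gᶜ, (k : ℕ∞) = Gᶜ.chromaticNumber) ∧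
    ((Fall Gᶜ).Nonempty ↔
      ∃ M : (SimpleGraph.induce {x : α | ∃ y, G.Adj x y} G).Subgraph, M.IsPerfectMatching) ∧
    ((∃ M : (SimpleGraph.induce {x : α | ∃ y, G.Adj x y} G).Subgraph, M.IsPerfectMatching) →
      Fall Gᶜ = {Nat.card α - Nat.card {x : α // ∃ y, G.Adj x y} / 2}) := by
  have hm : Nat.card {x : α // ∃ y, G.Adj x y}
      = (univ.filter fun x : α => ∃ y, G.Adj x y).card := by
    rw [Nat.card_eq_fintype_card, Fintype.card_subtype]
  refine ⟨?_, ⟨matching_of_fall hbip, fall_of_matching hbip⟩, ?_⟩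
  · intro k hk
    have hcount := fall_card hbip hk
    obtain ⟨hk0, f, hf⟩ := hk
    refine le_antisymm ?_ ?_
    · rw [SimpleGraph.chromaticNumber]
      refine le_iInf₂ fun j hj => ?_
      obtain ⟨g⟩ := (hj : Gᶜ.Colorable j)
      have hcount2 := proper_card hbip g
      exact_mod_cast (by omega : k ≤ j)
    · exact SimpleGraph.Colorable.chromaticNumber_le
        ⟨SimpleGraph.Coloring.mk f fun {u v} h => hf.1 u v h⟩
  · intro hMatch
    obtain ⟨k0, hk0⟩ := fall_of_matching hbip hMatch
    have hval : ∀ k ∈ Fall Gᶜ, k = Nat.card α - Nat.card {x : α // ∃ y, G.Adj x y} / 2 := by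
      intro k hk
      have hcount := fall_card hbip hk
      rw [hm, Nat.card_eq_fintype_card]
      omega
    apply Set.eq_singleton_iff_unique_mem.2
    refine ⟨?_, hval⟩
    have := hval k0 hk0
    rwa [this] at hk0
end
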